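/- There exists an absolute constant C such that for all x ≥ 2, |D(x,2,x) − (1 − 1/e)·(log x)/log 2| ≤ C. -/

import Mathlib

open Real Filter

open scoped Classical

noncomputable section

/-- The finite set of primes not exceeding `y`. -/
def primesLE (y : ℝ) : Finset ℕ := (Finset.range (⌊y⌋₊ + 1)).filter Nat.Prime

/-- `ζ(s, y) = ∏_{p ≤ y} (1 - p^{-s})⁻¹`. -/
def zetaS (s y : ℝ) : ℝ := ∏ p ∈ primesLE y, (1 - (p : ℝ) ^ (-s))⁻¹

/-- `φ_y(s) = ∑_{p ≤ y} log p / (p^s - 1)`. -/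
def phiS (y s : ℝ) : ℝ := ∑ p ∈ primesLE y, Real.log p / ((p : ℝ) ^ s - 1)

/-- The saddle point `α(x, y)`: the unique positive solution of `φ_y(α) = log x`. -/
def saddle (x y : ℝ) : ℝ := Classical.epsilon fun s : ℝ => 0 < s ∧ phiS y s = Real.log x

/-- The set `S(X, y)` of `y`-friable integers `n` with `1 ≤ n ≤ X`, as a finset. -/
def smoothSet (X y : ℝ) : Finset ℕ :=
  (Finset.Icc 1 ⌊X⌋₊).filter fun n => ∀ p ∈ n.primeFactors, (p : ℝ) ≤ y

/-- `Ψ(x, y) = #S(x, y)`. -/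
def Psi (x y : ℝ) : ℝ := (smoothSet x y).card

/-- `D(x, y, z) = ∑_{n ∈ S(z, y)} n^{-α(x, y)}`. -/
def Dxyz (x y z : ℝ) : ℝ := ∑ n ∈ smoothSet z y, (n : ℝ) ^ (-(saddle x y))

/-- `P(x, y, z) = D(x, y, z) / ζ(α, y)`. -/
def Pxyz (x y z : ℝ) : ℝ := Dxyz x y z / zetaS (saddle x y) y

/-- `u = log x / log y`. -/
def uxy (x y : ℝ) : ℝ := Real.log x / Real.log y

/-- `ū = min(y, log x) / log y`. -/
def ubar (x y : ℝ) : ℝ := min y (Real.log x) / Real.log y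

/-- `Θ(x, y) > 0`, defined by `Θ² = |φ'_y(α)| / (log y)²`. -/
def Theta (x y : ℝ) : ℝ := Real.sqrt (|deriv (phiS y) (saddle x y)| / (Real.log y) ^ 2)

/-- The standard normal distribution function `Φ`. -/
def gaussPhi (h : ℝ) : ℝ := (Real.sqrt (2 * Real.pi))⁻¹ * ∫ t in Set.Iic h, Real.exp (-t ^ 2 / 2)


lemma exp_lip_aux (a b : ℝ) (hab : a ≤ b) (hb : b ≤ 0) :
    Real.exp b - Real.exp a ≤ b - a := by
  have h1 : 1 + (a - b) ≤ Real.exp (a - b) := by linarith [Real.add_one_le_exp (a - b)]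
  have h2 : Real.exp b ≤ 1 := Real.exp_le_one_iff.mpr hb
  have h3 : (0:ℝ) < Real.exp b := Real.exp_pos _
  have h4 : Real.exp a = Real.exp b * Real.exp (a - b) := by
    rw [← Real.exp_add]; ring_nf
  nlinarith [mul_le_mul_of_nonneg_left h1 h3.le]

lemma exp_lip (a b : ℝ) (ha : a ≤ 0) (hb : b ≤ 0) :
    |Real.exp a - Real.exp b| ≤ |a - b| := by
  rcases le_total a b with h | h
  · rw [abs_sub_comm, abs_of_nonneg (by linarith [Real.exp_le_exp.mpr h]),
      abs_sub_comm, abs_of_nonneg (by linarith)]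
    exact exp_lip_aux a b h hb
  · rw [abs_of_nonneg (by linarith [Real.exp_le_exp.mpr h]), abs_of_nonneg (by linarith)]
    exact exp_lip_aux b a h ha

lemma primesLE_two : primesLE 2 = {2} := by
  unfold primesLE; norm_num; decide

lemma phiS_two (s : ℝ) : phiS 2 s = Real.log 2 / ((2:ℝ) ^ s - 1) := by
  unfold phiS; rw [primesLE_two]; simp

lemma saddle_eq (x : ℝ) (hx : 2 ≤ x) :
    (2:ℝ) ^ (saddle x 2) = 1 + Real.log 2 / Real.log x := by
  have hl2 : (0:ℝ) < Real.log 2 := Real.log_pos (by norm_num)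
  have hL : 0 < Real.log x := Real.log_pos (by linarith)
  set s₀ : ℝ := Real.log (1 + Real.log 2 / Real.log x) / Real.log 2 with hs₀
  have hpos : 0 < 1 + Real.log 2 / Real.log x := by positivity
  have h2s₀ : (2:ℝ) ^ s₀ = 1 + Real.log 2 / Real.log x := by
    rw [Real.rpow_def_of_pos (by norm_num), hs₀]
    rw [mul_div_cancel₀ _ hl2.ne', Real.exp_log hpos]
  have hsol : 0 < s₀ ∧ phiS 2 s₀ = Real.log x := by
    constructor
    · apply div_pos _ hl2
      apply Real.log_pos
      have : 0 < Real.log 2 / Real.log x := by positivity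
      linarith
    · rw [phiS_two, h2s₀]
      field_simp
      rw [add_sub_cancel_left, div_self hl2.ne']
  have hsad := Classical.epsilon_spec (p := fun s : ℝ => 0 < s ∧ phiS 2 s = Real.log x) ⟨s₀, hsol⟩
  obtain ⟨hpos', heq⟩ : 0 < saddle x 2 ∧ phiS 2 (saddle x 2) = Real.log x := hsad
  rw [phiS_two] at heq
  have hne : (2:ℝ) ^ (saddle x 2) - 1 ≠ 0 := by
    intro h; rw [h, div_zero] at heq; linarith
  have : Real.log 2 = Real.log x * ((2:ℝ) ^ (saddle x 2) - 1) := by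
    field_simp at heq; linarith [heq]
  field_simp
  linarith [this]

lemma smoothSet_two (x : ℝ) (hx : 2 ≤ x) :
    smoothSet x 2 = (Finset.range (Nat.log 2 ⌊x⌋₊ + 1)).image (2 ^ ·) := by
  have hfl : 2 ≤ ⌊x⌋₊ := Nat.le_floor (by exact_mod_cast hx)
  ext n
  simp only [smoothSet, Finset.mem_filter, Finset.mem_Icc, Finset.mem_image,
    Finset.mem_range]
  constructor
  · rintro ⟨⟨h1, h2⟩, hp⟩
    have hn0 : n ≠ 0 := by omega
    have hsub : n.primeFactors ⊆ {2} := by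
      intro p hp'
      have hple : (p:ℝ) ≤ 2 := hp p hp'
      have hprime : p.Prime := Nat.prime_of_mem_primeFactors hp'
      have : p ≤ 2 := by exact_mod_cast hple
      have := hprime.two_le
      simp; omega
    have hn : n = 2 ^ (n.factorization 2) := by
      conv_lhs => rw [← Nat.factorization_prod_pow_eq_self hn0]
      rw [Finsupp.prod_of_support_subset (s := {2}) _
        (by rwa [Nat.support_factorization]) _
        (fun p _ => pow_zero p), Finset.prod_singleton]
    refine ⟨n.factorization 2, ?_, hn.symm⟩
    have h2K : 2 ^ (n.factorization 2) ≤ ⌊x⌋₊ := hn ▸ h2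
    have := (Nat.le_log_iff_pow_le (by norm_num) (by omega)).mpr h2K
    omega
  · rintro ⟨k, hk, rfl⟩
    refine ⟨⟨Nat.one_le_two_pow, ?_⟩, ?_⟩
    · exact (Nat.le_log_iff_pow_le (by norm_num) (by omega)).mp (by omega)
    · intro p hp'
      have hprime := Nat.prime_of_mem_primeFactors hp'
      have hdvd : p ∣ 2 ^ k := Nat.dvd_of_mem_primeFactors hp'
      have : p ∣ 2 := hprime.dvd_of_dvd_pow hdvd
      have := Nat.le_of_dvd (by norm_num) this
      exact_mod_cast this

/-- There is an absolute constant `C` such that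
`|D(x, 2, x) - (1 - 1/e) log x / log 2| ≤ C` for all `x ≥ 2`. -/
theorem D_x2x_approx :
    ∃ C : ℝ, 0 < C ∧
      ∀ x : ℝ, 2 ≤ x →
        |Dxyz x 2 x - (1 - Real.exp (-1)) * Real.log x / Real.log 2| ≤ C := by
  refine ⟨3, by norm_num, fun x hx => ?_⟩
  have hl2 : (0:ℝ) < Real.log 2 := Real.log_pos (by norm_num)
  have hL : Real.log 2 ≤ Real.log x := Real.log_le_log (by norm_num) hx
  have hL0 : 0 < Real.log x := lt_of_lt_of_le hl2 hL
  set L := Real.log x with hLdef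
  set l2 := Real.log 2 with hl2def
  set α := saddle x 2 with hαdef
  set K := Nat.log 2 ⌊x⌋₊ with hKdef
  set t : ℝ := l2 / L with htdef
  have ht0 : 0 < t := div_pos hl2 hL0
  have ht1 : t ≤ 1 := by rw [htdef, div_le_one hL0]; exact hL
  have h1t : (0:ℝ) < 1 + t := by linarith
  have hsad : (2:ℝ) ^ α = 1 + t := saddle_eq x hx
  set q : ℝ := (2:ℝ) ^ (-α) with hqdef
  have hq : q = (1 + t)⁻¹ := by
    rw [hqdef, Real.rpow_neg (by norm_num), hsad]
  have hq0 : 0 < q := by rw [hq]; positivity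
  have hq1 : q < 1 := by
    rw [hq, inv_lt_one_iff₀]; right; linarith
  -- rewrite the sum
  have hD : Dxyz x 2 x = ∑ k ∈ Finset.range (K+1), q ^ k := by
    unfold Dxyz
    rw [smoothSet_two x hx,
      Finset.sum_image (fun a _ b _ h => Nat.pow_right_injective le_rfl h)]
    apply Finset.sum_congr rfl
    intro k _
    push_cast
    rw [← Real.rpow_natCast 2 k, ← Real.rpow_mul (by norm_num),
      show (k:ℝ) * (-(saddle x 2)) = (-(saddle x 2)) * k from mul_comm _ _,
      Real.rpow_mul (by norm_num), Real.rpow_natCast]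
  set E : ℝ := q ^ (K+1) with hEdef
  have hgeom : Dxyz x 2 x = (1 - E) * (L / l2 + 1) := by
    rw [hD, geom_sum_eq (by linarith) (K+1), ← hEdef, hq]
    rw [htdef]
    have h1 : (1:ℝ) + l2 / L ≠ 0 := by rw [← htdef]; linarith
    have h2 : ((1:ℝ) + l2 / L)⁻¹ - 1 ≠ 0 := by
      rw [← htdef, ← hq, ← htdef] at *
      intro h; have : q = 1 := by linarith
      linarith
    field_simp [hl2.ne', hL0.ne']
    ring
  -- bounds on K
  have hfl2 : 2 ≤ ⌊x⌋₊ := Nat.le_floor (by exact_mod_cast hx)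
  have hK1 : (K:ℝ) * l2 ≤ L := by
    have h1 : (2:ℕ) ^ K ≤ ⌊x⌋₊ := Nat.pow_log_le_self 2 (by omega)
    have h2 : ((2:ℕ) ^ K : ℝ) ≤ x := le_trans (by exact_mod_cast h1) (Nat.floor_le (by linarith))
    have h3 : Real.log ((2:ℝ) ^ K) ≤ L := Real.log_le_log (by positivity) (by exact_mod_cast h2)
    rw [Real.log_pow] at h3
    push_cast at h3 ⊢
    linarith
  have hK2 : L < ((K:ℝ) + 1) * l2 := by
    have h1 : ⌊x⌋₊ < 2 ^ (K + 1) := Nat.lt_pow_succ_log_self (by norm_num) _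
    have h2 : x < ((2:ℕ) ^ (K+1) : ℝ) := by
      have := Nat.lt_floor_add_one x
      have h3 : (⌊x⌋₊:ℝ) + 1 ≤ ((2:ℕ)^(K+1):ℝ) := by exact_mod_cast h1
      linarith
    have h4 : L < Real.log ((2:ℝ) ^ (K+1)) :=
      Real.log_lt_log (by linarith) (by exact_mod_cast h2)
    rw [Real.log_pow] at h4
    push_cast at h4 ⊢
    linarith
  -- E = exp(-s), with |s - 1| ≤ t
  set s : ℝ := ((K:ℝ) + 1) * Real.log (1 + t) with hsdef
  have hlog_ub : Real.log (1 + t) ≤ t := by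
    have := Real.log_le_sub_one_of_pos h1t
    linarith
  have hlog_lb : t / (1 + t) ≤ Real.log (1 + t) := by
    have h := Real.log_le_sub_one_of_pos (x := (1 + t)⁻¹) (by positivity)
    rw [Real.log_inv] at h
    have : (1 + t)⁻¹ - 1 = -(t / (1 + t)) := by field_simp; ring
    linarith [this ▸ h]
  have hlog_pos : 0 ≤ Real.log (1 + t) := Real.log_nonneg (by linarith)
  have hKub : (K:ℝ) + 1 ≤ 1 / t + 1 := by
    rw [htdef, one_div_div]
    have : (K:ℝ) ≤ L / l2 := (le_div_iff₀ hl2).mpr hK1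
    linarith
  have hKlb : 1 / t < (K:ℝ) + 1 := by
    rw [htdef, one_div_div, div_lt_iff₀ hl2]
    exact hK2
  have hs_pos : 0 ≤ s := mul_nonneg (by positivity) hlog_pos
  have hs_ub : s ≤ 1 + t := by
    have h := mul_le_mul hKub hlog_ub hlog_pos (by positivity : (0:ℝ) ≤ 1/t + 1)
    calc s ≤ (1/t + 1) * t := h
      _ = 1 + t := by field_simp
  have hs_lb : 1 - t ≤ s := by
    have h := mul_le_mul hKlb.le hlog_lb (by positivity) (by positivity : (0:ℝ) ≤ (K:ℝ)+1)
    have h2 : (1/t)*(t/(1+t)) = (1+t)⁻¹ := by field_simp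
    have h3 : 1 - t ≤ (1+t)⁻¹ := by
      have h4 : (1-t)*(1+t) ≤ 1 := by nlinarith [sq_nonneg t]
      calc 1 - t = (1-t)*(1+t)/(1+t) := by field_simp
        _ ≤ 1/(1+t) := by gcongr
        _ = (1+t)⁻¹ := one_div _
    rw [h2] at h
    linarith
  have hE : E = Real.exp (-s) := by
    rw [hEdef, hq]
    have h5 : (1+t)⁻¹ = Real.exp (-(Real.log (1+t))) := by
      rw [Real.exp_neg, Real.exp_log h1t]
    rw [h5, ← Real.exp_nat_mul]
    congr 1
    push_cast
    rw [hsdef]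
    ring
  have hE0 : 0 ≤ E := by rw [hE]; positivity
  have hE1 : E ≤ 1 := by rw [hE]; exact Real.exp_le_one_iff.mpr (by linarith)
  have hEdiff : |Real.exp (-1) - E| ≤ t := by
    rw [hE]
    calc |Real.exp (-1) - Real.exp (-s)| ≤ |(-1 : ℝ) - (-s)| :=
          exp_lip (-1) (-s) (by norm_num) (by linarith)
      _ = |s - 1| := by congr 1; ring
      _ ≤ t := abs_le.mpr ⟨by linarith, by linarith⟩
  have hdiff : Dxyz x 2 x - (1 - Real.exp (-1)) * L / l2
      = (Real.exp (-1) - E) * (L / l2) + (1 - E) := by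
    rw [hgeom]
    field_simp
    ring
  calc |Dxyz x 2 x - (1 - Real.exp (-1)) * L / l2|
      = |(Real.exp (-1) - E) * (L / l2) + (1 - E)| := by rw [hdiff]
    _ ≤ |(Real.exp (-1) - E) * (L / l2)| + |1 - E| := abs_add_le _ _
    _ ≤ t * (L / l2) + 1 := by
        have ha : |(Real.exp (-1) - E) * (L / l2)| = |Real.exp (-1) - E| * (L / l2) := by
          rw [abs_mul, abs_of_nonneg (le_of_lt (div_pos hL0 hl2))]
        have hb : |1 - E| ≤ 1 := abs_le.mpr ⟨by linarith, by linarith⟩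
        have hc : |Real.exp (-1) - E| * (L / l2) ≤ t * (L / l2) := by
          exact mul_le_mul_of_nonneg_right hEdiff (le_of_lt (div_pos hL0 hl2))
        rw [ha]
        linarith
    _ = 1 + 1 := by
        rw [htdef]
        field_simp
    _ ≤ 3 := by norm_num


end
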